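/- Let p and q be coprime integers with q > 0, let w be a positive integer, and let d = gcd(q, w²). If α and β are nonzero complex numbers with α^p·β^q = 1, then there exists a nonzero complex number η such that η^w = α and η^{p·w²/d}·β^{w·q/d} = 1. -/

import Mathlib

lemma adjust (n w'' : ℤ) (hn : 0 < n) (hw'' : 0 < w'') (a : ℤ)
    (hcop : IsCoprime a n) (ζ : ℂ) (hζ : ζ ^ n = 1) :
    ∃ ν : ℂ, ν ≠ 0 ∧ ν ^ (n * w'') = 1 ∧ ν ^ (a * w'') = ζ⁻¹ := by
  have hζ0 : ζ ≠ 0 := by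
    intro h0; rw [h0, zero_zpow _ hn.ne'] at hζ; exact one_ne_zero hζ.symm
  set N : ℕ := n.toNat with hN
  have hNn : (N : ℤ) = n := Int.toNat_of_nonneg hn.le
  have hN0 : N ≠ 0 := by omega
  haveI : NeZero N := ⟨hN0⟩
  set W : ℕ := (n * w'').toNat with hW
  have hWn : (W : ℤ) = n * w'' := Int.toNat_of_nonneg (by positivity)
  have hW0 : W ≠ 0 := by
    intro h0; rw [h0] at hWn; push_cast at hWn; nlinarith [mul_pos hn hw'']
  set prim : ℂ := Complex.exp (2 * Real.pi * Complex.I / N) with hprimdef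
  have hprim : IsPrimitiveRoot prim N := Complex.isPrimitiveRoot_exp N hN0
  have hζinv : ζ⁻¹ ^ N = 1 := by
    rw [inv_pow, ← zpow_natCast, hNn, hζ, inv_one]
  obtain ⟨s, hs, hps⟩ := hprim.eq_pow_of_pow_eq_one hζinv
  obtain ⟨c, c', hbez⟩ := hcop
  set μ : ℂ := Complex.exp (2 * Real.pi * Complex.I / W) with hμdef
  have hμ0 : μ ≠ 0 := Complex.exp_ne_zero _
  have hprim0 : prim ≠ 0 := Complex.exp_ne_zero _
  have hnC : (n : ℂ) ≠ 0 := Int.cast_ne_zero.mpr hn.ne'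
  have hw''C : (w'' : ℂ) ≠ 0 := Int.cast_ne_zero.mpr hw''.ne'
  have hNC : (N : ℂ) = (n : ℂ) := by exact_mod_cast congrArg (fun x : ℤ => (x : ℂ)) hNn
  have hWC : (W : ℂ) = (n : ℂ) * (w'' : ℂ) := by exact_mod_cast congrArg (fun x : ℤ => (x : ℂ)) hWn
  have hμw : μ ^ (w'' : ℤ) = prim := by
    rw [hμdef, hprimdef, ← Complex.exp_int_mul]
    congr 1
    rw [hWC, hNC]
    field_simp
  have hμW : μ ^ (n * w'') = 1 := by
    rw [mul_comm n w'', zpow_mul, hμw, hprimdef, ← Complex.exp_int_mul]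
    rw [hNC]
    have : (n : ℂ) * (2 * Real.pi * Complex.I / n) = 2 * Real.pi * Complex.I := by
      field_simp
    rw [this]
    exact Complex.exp_two_pi_mul_I
  have hprimN : prim ^ (n : ℤ) = 1 := by
    rw [← hNn, zpow_natCast]; exact hprim.pow_eq_one
  refine ⟨μ ^ (c * (s : ℤ)), zpow_ne_zero _ hμ0, ?_, ?_⟩
  · rw [← zpow_mul, mul_comm (c * (s:ℤ)) (n * w''), zpow_mul, hμW, one_zpow]
  · have : (μ ^ (c * (s : ℤ))) ^ (a * w'') = (μ ^ (w'' : ℤ)) ^ (c * (s:ℤ) * a) := by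
      rw [← zpow_mul, ← zpow_mul]; congr 1; ring
    rw [this, hμw]
    have hca : c * (s:ℤ) * a = (s : ℤ) * (1 - c' * n) := by linear_combination (s : ℤ) * hbez
    rw [hca]
    have h2 : (s:ℤ) * (1 - c' * n) = (s:ℤ) + n * (-((s:ℤ) * c')) := by ring
    rw [h2, zpow_add₀ hprim0, zpow_mul, hprimN, one_zpow, mul_one, zpow_natCast, hps]

/-- Case 1 of Lemma 5.3: if `α^p·β^q = 1` for nonzero complex numbers `α, β`, with
`p, q` coprime, `q > 0`, `w > 0`, and `d = gcd(q, w²)`, then there is a nonzero complex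
number `η` with `η^w = α` and `η^{p·w²/d}·β^{w·q/d} = 1`. -/
theorem stmt_13 (p q : ℤ) (hq : 0 < q) (hcop : IsCoprime p q)
    (w : ℤ) (hw : 0 < w) (d : ℤ) (hd : d = Int.gcd q (w ^ 2))
    (α β : ℂ) (hα : α ≠ 0) (hβ : β ≠ 0) (h : α ^ p * β ^ q = 1) :
    ∃ η : ℂ, η ≠ 0 ∧ η ^ w = α ∧ η ^ (p * w ^ 2 / d) * β ^ (w * q / d) = 1 := by
  -- integer setup
  have hd0 : 0 < d := by
    rw [hd]; exact_mod_cast Int.gcd_pos_of_ne_zero_left _ hq.ne'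
  have hdq : d ∣ q := hd ▸ Int.gcd_dvd_left q (w ^ 2)
  have hdw2 : d ∣ w ^ 2 := hd ▸ Int.gcd_dvd_right q (w ^ 2)
  set e : ℤ := (Int.gcd w d : ℤ) with he
  have he0n : 0 < Int.gcd w d := Int.gcd_pos_of_ne_zero_left _ hw.ne'
  have he0 : 0 < e := by rw [he]; exact_mod_cast he0n
  have hew : e ∣ w := Int.gcd_dvd_left w d
  have hed : e ∣ d := Int.gcd_dvd_right w d
  set w' : ℤ := w / e with hw'def
  set d' : ℤ := d / e with hd'def
  have hw'eq : w = e * w' := (Int.mul_ediv_cancel' hew).symm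
  have hd'eq : d = e * d' := (Int.mul_ediv_cancel' hed).symm
  have hd'0 : 0 < d' := by nlinarith
  have hw'0 : 0 < w' := by nlinarith
  have hcopw'd' : IsCoprime w' d' := by
    rw [Int.isCoprime_iff_gcd_eq_one, hw'def, hd'def, he]
    exact Int.gcd_div_gcd_div_gcd he0n
  have hd'e : d' ∣ e := by
    have h1 : d' ∣ e * w' ^ 2 := by
      obtain ⟨k, hk⟩ := hdw2
      refine ⟨k, mul_left_cancel₀ he0.ne' ?_⟩
      rw [hw'eq, hd'eq] at hk; nlinarith [hk]
    exact ((hcopw'd'.symm).pow_right (n := 2)).dvd_of_dvd_mul_right h1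
  have hd'w : d' ∣ w := hd'e.trans hew
  set w'' : ℤ := w / d' with hw''def
  have hw''eq : w = d' * w'' := (Int.mul_ediv_cancel' hd'w).symm
  have hw''0 : 0 < w'' := by nlinarith
  have hd'q : d' ∣ q := (Dvd.intro_left e hd'eq.symm).trans hdq
  have hpd' : IsCoprime p d' := hcop.of_isCoprime_of_dvd_right hd'q
  have hcopa : IsCoprime (p * w') d' := hpd'.mul_left hcopw'd'.symm.symm
  set q₀ : ℤ := q / d with hq₀def
  have hq₀eq : q = d * q₀ := (Int.mul_ediv_cancel' hdq).symm
  have hw2 : w ^ 2 = d * (w' * w'') := by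
    rw [hd'eq]; linear_combination w * hw''eq + (d' * w'') * hw'eq
  have hP : p * w ^ 2 / d = (p * w') * w'' := by
    rw [hw2, ← mul_assoc, mul_comm p d, mul_assoc,
      Int.mul_ediv_cancel_left _ hd0.ne']; ring
  have hQ : w * q / d = w * q₀ := by
    rw [hq₀eq, mul_comm d q₀, ← mul_assoc, Int.mul_ediv_cancel _ hd0.ne']
  -- complex setup
  obtain ⟨u, v, huv⟩ := hcop
  set γ : ℂ := α ^ v * β ^ (-u) with hγdef
  have hγ0 : γ ≠ 0 := mul_ne_zero (zpow_ne_zero _ hα) (zpow_ne_zero _ hβ)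
  have hβq : β ^ q = (α ^ p)⁻¹ := eq_inv_of_mul_eq_one_right h
  have hγq : γ ^ q = α := by
    calc (α ^ v * β ^ (-u)) ^ q = α ^ (v * q) * (β ^ q) ^ (-u) := by
          rw [mul_zpow, ← zpow_mul, ← zpow_mul, mul_comm (-u) q, zpow_mul β q (-u)]
    _ = α ^ (v * q) * α ^ (p * u) := by
          rw [hβq, inv_zpow, zpow_neg, inv_inv, ← zpow_mul]
    _ = α ^ (v * q + p * u) := by rw [← zpow_add₀ hα]
    _ = α := by rw [show v * q + p * u = 1 by linarith [huv]]; exact zpow_one α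
  obtain ⟨δ, hδnat⟩ := IsAlgClosed.exists_pow_nat_eq γ (n := w.toNat) (by omega)
  have hδw : δ ^ w = γ := by
    rw [← zpow_natCast] at hδnat
    rwa [Int.toNat_of_nonneg hw.le] at hδnat
  have hδ0 : δ ≠ 0 := by
    intro h0; rw [h0, zero_zpow _ hw.ne'] at hδw; exact hγ0 hδw.symm
  set τ : ℂ := δ ^ (w * p) * β with hτdef
  have hτq : τ ^ q = 1 := by
    calc (δ ^ (w * p) * β) ^ q = (δ ^ w) ^ (p * q) * β ^ q := by
          rw [mul_zpow, ← zpow_mul, ← zpow_mul, mul_assoc]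
    _ = α ^ p * β ^ q := by rw [hδw, mul_comm p q, zpow_mul, hγq]
    _ = 1 := h
  set ζ : ℂ := τ ^ (w * q₀) with hζdef
  have hτ0 : τ ≠ 0 := by
    intro h0; rw [h0, zero_zpow _ hq.ne'] at hτq; exact one_ne_zero hτq.symm
  have hζd' : ζ ^ d' = 1 := by
    rw [hζdef, ← zpow_mul]
    have : w * q₀ * d' = q * w' := by
      rw [hq₀eq, hd'eq]; linear_combination q₀ * d' * hw'eq
    rw [this, zpow_mul, hτq, one_zpow]
  obtain ⟨ν, hν0, hνw, hνP⟩ := adjust d' w'' hd'0 hw''0 (p * w') hcopa ζ hζd'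
  refine ⟨δ ^ q * ν, mul_ne_zero (zpow_ne_zero _ hδ0) hν0, ?_, ?_⟩
  · rw [mul_zpow, ← zpow_mul, mul_comm q w, zpow_mul, hδw, hγq,
      hw''eq, hνw, mul_one]
  · have hβeq : β = δ ^ (-(w * p)) * τ := by
      rw [hτdef, zpow_neg, ← mul_assoc, inv_mul_cancel₀ (zpow_ne_zero _ hδ0), one_mul]
    rw [hP, hQ, hβeq, mul_zpow, mul_zpow, ← zpow_mul, ← zpow_mul,
      hνP, ← hζdef]
    have hexp : q * (p * w' * w'') + -(w * p) * (w * q₀) = 0 := by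
      have : w * (w * q₀) = w' * w'' * q := by
        rw [hq₀eq]; linear_combination q₀ * hw2
      linear_combination -p * this
    calc δ ^ (q * (p * w' * w'')) * ζ⁻¹ * (δ ^ (-(w * p) * (w * q₀)) * ζ) =
        δ ^ (q * (p * w' * w'') + -(w * p) * (w * q₀)) * (ζ⁻¹ * ζ) := by
          rw [zpow_add₀ hδ0]; ring
    _ = 1 := by
        rw [hexp, zpow_zero, inv_mul_cancel₀ (zpow_ne_zero (w * q₀) hτ0 : ζ ≠ 0), mul_one]
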